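/- Let g₁, g₂ : [0,∞) → (0,∞) be left-continuous with g₁(s) ≤ g₂(s) for all s, and let Γ₁, Γ₂ solve Γᵢ(t) = ∫₀ᵗ gᵢ(Γᵢ(s)) ds. Assume both solutions exist and are finite on [0,T]. Then Γ₁(t) ≤ Γ₂(t) for all t ∈ [0,T]. -/

import Mathlib

open MeasureTheory intervalIntegral Set Filter Topology

section aux
variable {g Γ : ℝ → ℝ} {T : ℝ}

lemma tc_zero (hT : 0 ≤ T) (hΓ : ∀ t ∈ Set.Icc 0 T, Γ t = ∫ s in (0:ℝ)..t, g (Γ s)) :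
    Γ 0 = 0 := by
  rw [hΓ 0 ⟨le_rfl, hT⟩, intervalIntegral.integral_same]

lemma tc_strictMono
    (hg_pos : ∀ s, 0 ≤ s → 0 < g s)
    (hΓ_nonneg : ∀ t ∈ Set.Icc 0 T, 0 ≤ Γ t)
    (hΓ_int : ∀ t ∈ Set.Icc 0 T, IntervalIntegrable (fun s => g (Γ s)) volume 0 t)
    (hΓ : ∀ t ∈ Set.Icc 0 T, Γ t = ∫ s in (0:ℝ)..t, g (Γ s)) :
    StrictMonoOn Γ (Set.Icc 0 T) := by
  intro s hs t ht hst
  have hint : IntervalIntegrable (fun u => g (Γ u)) volume s t :=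
    (hΓ_int t ht).mono_set (uIcc_subset_uIcc
      (by rw [uIcc_of_le ht.1]; exact ⟨hs.1, hst.le.trans le_rfl⟩)
      (by rw [uIcc_of_le ht.1]; exact ⟨ht.1, le_rfl⟩))
  have hkey : Γ t - Γ s = ∫ u in s..t, g (Γ u) := by
    rw [hΓ t ht, hΓ s hs]
    exact integral_interval_sub_left (hΓ_int t ht) (hΓ_int s hs)
  have hpos : 0 < ∫ u in s..t, g (Γ u) :=
    intervalIntegral_pos_of_pos_on hint
      (fun u hu => hg_pos _ (hΓ_nonneg u ⟨hs.1.trans hu.1.le, hu.2.le.trans ht.2⟩)) hst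
  linarith

lemma tc_cont (hT : 0 ≤ T)
    (hΓ_int : ∀ t ∈ Set.Icc 0 T, IntervalIntegrable (fun s => g (Γ s)) volume 0 t)
    (hΓ : ∀ t ∈ Set.Icc 0 T, Γ t = ∫ s in (0:ℝ)..t, g (Γ s)) :
    ContinuousOn Γ (Set.Icc 0 T) := by
  have hi : IntegrableOn (fun s => g (Γ s)) (Set.Icc 0 T) :=
    (intervalIntegrable_iff_integrableOn_Icc_of_le hT).mp (hΓ_int T ⟨hT, le_rfl⟩)
  have h := intervalIntegral.continuousOn_primitive_interval
    (μ := volume) (a := (0:ℝ)) (b := T) (f := fun s => g (Γ s)) (by rwa [uIcc_of_le hT])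
  rw [uIcc_of_le hT] at h
  exact h.congr hΓ

lemma tc_deriv (hT : 0 ≤ T)
    (hg_pos : ∀ s, 0 ≤ s → 0 < g s)
    (hg_left : ∀ s, 0 < s → ContinuousWithinAt g (Set.Iic s) s)
    (hΓ_nonneg : ∀ t ∈ Set.Icc 0 T, 0 ≤ Γ t)
    (hΓ_int : ∀ t ∈ Set.Icc 0 T, IntervalIntegrable (fun s => g (Γ s)) volume 0 t)
    (hΓ : ∀ t ∈ Set.Icc 0 T, Γ t = ∫ s in (0:ℝ)..t, g (Γ s)) :
    ∀ t ∈ Set.Ioc 0 T, HasDerivWithinAt Γ (g (Γ t)) (Set.Iic t) t := by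
  intro t ht
  have htT : t ∈ Set.Icc 0 T := ⟨ht.1.le, ht.2⟩
  have hmem : Set.Icc 0 t ∈ 𝓝[Set.Iic t] t := Icc_mem_nhdsLE ht.1
  -- positivity of Γ t
  have hsm := tc_strictMono hg_pos hΓ_nonneg hΓ_int hΓ
  have hΓ0 := tc_zero hT hΓ
  have hΓt_pos : 0 < Γ t := by
    have := hsm ⟨le_rfl, hT⟩ htT ht.1
    rwa [hΓ0] at this
  -- continuity of g ∘ Γ from the left at t
  have hΓcont : ContinuousWithinAt Γ (Set.Icc 0 t) t :=
    ((tc_cont hT hΓ_int hΓ) t htT).mono (Icc_subset_Icc le_rfl ht.2)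
  have hmaps : MapsTo Γ (Set.Icc 0 t) (Set.Iic (Γ t)) := fun u hu =>
    (hsm.monotoneOn ⟨hu.1, hu.2.trans ht.2⟩ htT hu.2 : Γ u ≤ Γ t)
  have hcomp : ContinuousWithinAt (fun s => g (Γ s)) (Set.Icc 0 t) t :=
    (hg_left _ hΓt_pos).comp hΓcont hmaps
  have hcont : ContinuousWithinAt (fun s => g (Γ s)) (Set.Iic t) t :=
    hcomp.mono_of_mem_nhdsWithin hmem
  have hmeas : StronglyMeasurableAtFilter (fun s => g (Γ s)) (𝓝[Set.Iic t] t) volume :=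
    ⟨Set.Icc 0 t, hmem,
      ((intervalIntegrable_iff_integrableOn_Icc_of_le ht.1.le).mp
        (hΓ_int t htT)).aestronglyMeasurable⟩
  have hF : HasDerivWithinAt (fun u => ∫ s in (0:ℝ)..u, g (Γ s)) (g (Γ t)) (Set.Iic t) t :=
    intervalIntegral.integral_hasDerivWithinAt_right (hΓ_int t htT) hmeas hcont
  refine hF.congr_of_eventuallyEq ?_ (hΓ t htT)
  filter_upwards [hmem] with u hu using hΓ u ⟨hu.1, hu.2.trans ht.2⟩

lemma tc_tau (hT : 0 ≤ T)
    (hg_pos : ∀ s, 0 ≤ s → 0 < g s)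
    (hg_left : ∀ s, 0 < s → ContinuousWithinAt g (Set.Iic s) s)
    (hΓ_nonneg : ∀ t ∈ Set.Icc 0 T, 0 ≤ Γ t)
    (hΓ_int : ∀ t ∈ Set.Icc 0 T, IntervalIntegrable (fun s => g (Γ s)) volume 0 t)
    (hΓ : ∀ t ∈ Set.Icc 0 T, Γ t = ∫ s in (0:ℝ)..t, g (Γ s)) :
    ∃ τ : ℝ → ℝ,
      (∀ t ∈ Set.Icc 0 T, τ (Γ t) = t) ∧
      (∀ x ∈ Set.Icc 0 (Γ T), τ x ∈ Set.Icc 0 T ∧ Γ (τ x) = x) ∧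
      ContinuousOn τ (Set.Icc 0 (Γ T)) ∧
      (∀ x ∈ Set.Ioc 0 (Γ T), HasDerivWithinAt τ (g x)⁻¹ (Set.Icc 0 x) x) := by
  have hsm := tc_strictMono hg_pos hΓ_nonneg hΓ_int hΓ
  have hcont := tc_cont hT hΓ_int hΓ
  have hΓ0 := tc_zero hT hΓ
  have hderiv := tc_deriv hT hg_pos hg_left hΓ_nonneg hΓ_int hΓ
  -- existence of preimages
  have hIVT : Set.Icc 0 (Γ T) ⊆ Γ '' Set.Icc 0 T := by
    have := intermediate_value_Icc hT hcont
    rwa [hΓ0] at this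
  have hex : ∀ x : ℝ, ∃ t, x ∈ Set.Icc 0 (Γ T) → t ∈ Set.Icc 0 T ∧ Γ t = x := by
    intro x
    by_cases hx : x ∈ Set.Icc 0 (Γ T)
    · obtain ⟨t, ht, hΓt⟩ := hIVT hx
      exact ⟨t, fun _ => ⟨ht, hΓt⟩⟩
    · exact ⟨0, fun h => absurd h hx⟩
  choose τ hτ using hex
  have hτ_mem : ∀ x ∈ Set.Icc 0 (Γ T), τ x ∈ Set.Icc 0 T := fun x hx => (hτ x hx).1
  have hτ_eq : ∀ x ∈ Set.Icc 0 (Γ T), Γ (τ x) = x := fun x hx => (hτ x hx).2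
  have hΓ_mem : ∀ t ∈ Set.Icc 0 T, Γ t ∈ Set.Icc 0 (Γ T) :=
    fun t ht => ⟨hΓ_nonneg t ht, hsm.monotoneOn ht ⟨hT, le_rfl⟩ ht.2⟩
  have hτΓ : ∀ t ∈ Set.Icc 0 T, τ (Γ t) = t := by
    intro t ht
    exact hsm.injOn (hτ_mem _ (hΓ_mem t ht)) ht (hτ_eq _ (hΓ_mem t ht))
  have hτ_sm : StrictMonoOn τ (Set.Icc 0 (Γ T)) := by
    intro x hx y hy hxy
    by_contra h
    push_neg at h
    have := hsm.monotoneOn (hτ_mem y hy) (hτ_mem x hx) h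
    rw [hτ_eq x hx, hτ_eq y hy] at this
    exact absurd this (not_le.mpr hxy)
  have hτ0 : τ 0 = 0 := by
    have := hτΓ 0 ⟨le_rfl, hT⟩
    rwa [hΓ0] at this
  -- continuity of τ
  have hτ_cont : ContinuousOn τ (Set.Icc 0 (Γ T)) := by
    intro x hx
    have hleft : x = 0 ∨ ContinuousWithinAt τ (Set.Iic x) x := by
      rcases eq_or_lt_of_le hx.1 with h0 | h0
      · exact Or.inl h0.symm
      · refine Or.inr (hτ_sm.continuousWithinAt_left_of_exists_between
          (Icc_mem_nhdsLE_of_mem ⟨h0, hx.2⟩) ?_)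
        intro c hc
        have hτx_pos : 0 < τ x := by
          have := hτ_sm ⟨le_rfl, hΓ_nonneg T ⟨hT, le_rfl⟩⟩ hx h0
          rwa [hτ0] at this
        refine ⟨Γ (max c 0), hΓ_mem _ ⟨le_max_right _ _, ?_⟩, ?_⟩
        · calc max c 0 ≤ τ x := max_le hc.le hτx_pos.le
            _ ≤ T := (hτ_mem x hx).2
        · rw [hτΓ _ ⟨le_max_right _ _, (max_le hc.le hτx_pos.le).trans (hτ_mem x hx).2⟩]
          exact ⟨le_max_left _ _, max_lt hc hτx_pos⟩
    have hright : x = Γ T ∨ ContinuousWithinAt τ (Set.Ici x) x := by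
      rcases eq_or_lt_of_le hx.2 with h1 | h1
      · exact Or.inl h1
      · refine Or.inr (hτ_sm.continuousWithinAt_right_of_exists_between
          (Icc_mem_nhdsGE_of_mem ⟨hx.1, h1⟩) ?_)
        intro c hc
        have hτxT : τ x < T := by
          have hGT : Γ T ∈ Set.Icc 0 (Γ T) := ⟨hΓ_nonneg T ⟨hT, le_rfl⟩, le_rfl⟩
          have h2 := hτ_sm hx hGT h1
          rwa [hτΓ T ⟨hT, le_rfl⟩] at h2
        refine ⟨Γ (min c T), hΓ_mem _ ⟨?_, min_le_right _ _⟩, ?_⟩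
        · exact le_min (((hτ_mem x hx).1.trans_lt hc).le) hT
        · rw [hτΓ _ ⟨le_min (((hτ_mem x hx).1.trans_lt hc).le) hT, min_le_right _ _⟩]
          exact ⟨lt_min hc hτxT, min_le_left _ _⟩
    rcases hleft with h0 | hl
    · rcases hright with h1 | hr
      · -- Icc is a singleton
        subst h0
        have : Set.Icc (0:ℝ) (Γ T) = {0} := by rw [← h1]; simp
        rw [this]
        exact continuousWithinAt_singleton
      · subst h0
        exact hr.mono (fun y hy => hy.1)
    · rcases hright with h1 | hr
      · subst h1
        exact hl.mono (fun y hy => hy.2)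
      · exact (hl.union hr).mono (fun y hy => by
          rcases le_total y x with h | h
          · exact Or.inl h
          · exact Or.inr h)
  refine ⟨τ, hτΓ, fun x hx => ⟨hτ_mem x hx, hτ_eq x hx⟩, hτ_cont, ?_⟩
  -- derivative
  intro x hx
  have hx' : x ∈ Set.Icc 0 (Γ T) := ⟨hx.1.le, hx.2⟩
  set t := τ x with ht_def
  have htIcc : t ∈ Set.Icc 0 T := hτ_mem x hx'
  have ht_pos : 0 < t := by
    have h0' : (0:ℝ) ∈ Set.Icc 0 (Γ T) := ⟨le_rfl, (hΓ_nonneg T ⟨hT, le_rfl⟩)⟩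
    have := hτ_sm h0' hx' hx.1
    rwa [hτ0] at this
  have hΓt : Γ t = x := hτ_eq x hx'
  have HΓ : HasDerivWithinAt Γ (g x) (Set.Iic t) t := by
    have := hderiv t ⟨ht_pos, htIcc.2⟩
    rwa [hΓt] at this
  rw [hasDerivWithinAt_iff_tendsto_slope]
  have hslopeΓ : Tendsto (slope Γ t) (𝓝[Set.Iic t \ {t}] t) (𝓝 (g x)) :=
    hasDerivWithinAt_iff_tendsto_slope.mp HΓ
  have hsub : Set.Icc 0 x \ {x} ⊆ Set.Icc 0 (Γ T) := fun y hy =>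
    ⟨hy.1.1, hy.1.2.trans hx.2⟩
  have hτtend : Tendsto τ (𝓝[Set.Icc 0 x \ {x}] x) (𝓝[Set.Iic t \ {t}] t) := by
    rw [tendsto_nhdsWithin_iff]
    constructor
    · exact ((hτ_cont x hx').mono hsub).tendsto
    · filter_upwards [self_mem_nhdsWithin] with y hy
      have hyx : y < x := lt_of_le_of_ne hy.1.2 hy.2
      have : τ y < t := hτ_sm (hsub hy) hx' hyx
      exact ⟨this.le, this.ne⟩
  have key : Tendsto (fun y => (slope Γ t (τ y))⁻¹) (𝓝[Set.Icc 0 x \ {x}] x)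
      (𝓝 (g x)⁻¹) :=
    (hslopeΓ.comp hτtend).inv₀ (ne_of_gt (hg_pos x hx.1.le))
  refine key.congr' ?_
  filter_upwards [self_mem_nhdsWithin] with y hy
  rw [slope_def_field, slope_def_field, hτ_eq y (hsub hy), hΓt, inv_div]

lemma left_deriv_nonneg_le {φ φ' : ℝ → ℝ} {a b : ℝ}
    (hφ : ContinuousOn φ (Set.Icc a b))
    (hd : ∀ x ∈ Set.Ioc a b, HasDerivWithinAt φ (φ' x) (Set.Icc a x) x)
    (h0 : ∀ x ∈ Set.Ioc a b, 0 ≤ φ' x) :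
    ∀ x ∈ Set.Icc a b, φ a ≤ φ x := by
  intro x hx
  rcases eq_or_lt_of_le hx.1 with h | hax
  · rw [← h]
  set ψ : ℝ → ℝ := fun y => -φ (-y) with hψ
  have hmaps : MapsTo (fun y : ℝ => -y) (Set.Icc (-x) (-a)) (Set.Icc a b) := by
    intro z hz
    simp only [Set.mem_Icc] at hz ⊢
    constructor <;> linarith [hz.1, hz.2, hx.2]
  have hψcont : ContinuousOn ψ (Set.Icc (-x) (-a)) :=
    ((hφ.comp (continuous_neg.continuousOn) hmaps).neg)
  have hψderiv : ∀ y ∈ Set.Ico (-x) (-a), HasDerivWithinAt ψ (φ' (-y)) (Set.Ici y) y := by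
    intro y hy
    have hz : -y ∈ Set.Ioc a b := ⟨by linarith [hy.2], by linarith [hy.1, hx.2]⟩
    have hneg : HasDerivWithinAt (fun y : ℝ => -y) (-1) (Set.Icc y (-a)) y :=
      (hasDerivWithinAt_id y _).neg
    have hmaps2 : MapsTo (fun y : ℝ => -y) (Set.Icc y (-a)) (Set.Icc a (-y)) := by
      intro z hz2
      simp only [Set.mem_Icc] at hz2 ⊢
      constructor <;> linarith [hz2.1, hz2.2]
    have hcomp := (hd (-y) hz).comp y hneg hmaps2
    have hcomp2 : HasDerivWithinAt ψ (φ' (-y)) (Set.Icc y (-a)) y := by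
      have := hcomp.neg
      simp [Function.comp_def, mul_comm] at this
      exact this
    exact hcomp2.mono_of_mem_nhdsWithin (Icc_mem_nhdsGE_of_mem ⟨le_rfl, hy.2⟩)
  have hfence := image_le_of_deriv_right_le_deriv_boundary
    (f := fun _ : ℝ => ψ (-x)) (f' := fun _ : ℝ => 0) (a := -x) (b := -a)
    continuousOn_const (fun y _ => hasDerivWithinAt_const y _ _) le_rfl
    hψcont hψderiv
    (fun y hy => h0 (-y) ⟨by linarith [hy.2], by linarith [hy.1, hx.2]⟩)
  have := hfence (x := -a) ⟨by linarith, le_rfl⟩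
  simp only [hψ, neg_neg] at this
  linarith

end aux

/-- Comparison principle for the time-change equation: if `g₁ ≤ g₂` are strictly
positive left-continuous rate functions and `Γᵢ` solve `Γᵢ(t) = ∫₀ᵗ gᵢ(Γᵢ(s)) ds`
on `[0,T]`, then `Γ₁ ≤ Γ₂` on `[0,T]`. -/
theorem stmt17 (g₁ g₂ Γ₁ Γ₂ : ℝ → ℝ) (T : ℝ) (hT : 0 ≤ T)
    (hg₁_pos : ∀ s, 0 ≤ s → 0 < g₁ s)
    (hg₂_pos : ∀ s, 0 ≤ s → 0 < g₂ s)
    (hg₁_left : ∀ s, 0 < s → ContinuousWithinAt g₁ (Set.Iic s) s)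
    (hg₂_left : ∀ s, 0 < s → ContinuousWithinAt g₂ (Set.Iic s) s)
    (hle : ∀ s, 0 ≤ s → g₁ s ≤ g₂ s)
    (hΓ₁_nonneg : ∀ t ∈ Set.Icc 0 T, 0 ≤ Γ₁ t)
    (hΓ₂_nonneg : ∀ t ∈ Set.Icc 0 T, 0 ≤ Γ₂ t)
    (hΓ₁_int : ∀ t ∈ Set.Icc 0 T, IntervalIntegrable (fun s => g₁ (Γ₁ s)) volume 0 t)
    (hΓ₂_int : ∀ t ∈ Set.Icc 0 T, IntervalIntegrable (fun s => g₂ (Γ₂ s)) volume 0 t)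
    (hΓ₁ : ∀ t ∈ Set.Icc 0 T, Γ₁ t = ∫ s in (0:ℝ)..t, g₁ (Γ₁ s))
    (hΓ₂ : ∀ t ∈ Set.Icc 0 T, Γ₂ t = ∫ s in (0:ℝ)..t, g₂ (Γ₂ s)) :
    ∀ t ∈ Set.Icc (0:ℝ) T, Γ₁ t ≤ Γ₂ t := by
  obtain ⟨τ₁, hτ₁Γ, hτ₁, hτ₁c, hτ₁d⟩ := tc_tau hT hg₁_pos hg₁_left hΓ₁_nonneg hΓ₁_int hΓ₁
  obtain ⟨τ₂, hτ₂Γ, hτ₂, hτ₂c, hτ₂d⟩ := tc_tau hT hg₂_pos hg₂_left hΓ₂_nonneg hΓ₂_int hΓ₂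
  have hsm₁ := tc_strictMono hg₁_pos hΓ₁_nonneg hΓ₁_int hΓ₁
  have hsm₂ := tc_strictMono hg₂_pos hΓ₂_nonneg hΓ₂_int hΓ₂
  set b := min (Γ₁ T) (Γ₂ T) with hb
  have hb1 : Set.Icc (0:ℝ) b ⊆ Set.Icc 0 (Γ₁ T) :=
    Set.Icc_subset_Icc le_rfl (min_le_left _ _)
  have hb2 : Set.Icc (0:ℝ) b ⊆ Set.Icc 0 (Γ₂ T) :=
    Set.Icc_subset_Icc le_rfl (min_le_right _ _)
  have hb1' : Set.Ioc (0:ℝ) b ⊆ Set.Ioc 0 (Γ₁ T) :=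
    Set.Ioc_subset_Ioc le_rfl (min_le_left _ _)
  have hb2' : Set.Ioc (0:ℝ) b ⊆ Set.Ioc 0 (Γ₂ T) :=
    Set.Ioc_subset_Ioc le_rfl (min_le_right _ _)
  have hmono : ∀ x ∈ Set.Icc (0:ℝ) b, τ₂ x ≤ τ₁ x := by
    have hkey := left_deriv_nonneg_le (φ := fun x => τ₁ x - τ₂ x)
      (φ' := fun x => (g₁ x)⁻¹ - (g₂ x)⁻¹) (a := 0) (b := b)
      ((hτ₁c.mono hb1).sub (hτ₂c.mono hb2))
      (fun x hx => (hτ₁d x (hb1' hx)).sub (hτ₂d x (hb2' hx)))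
      (fun x hx => by
        have h1 := hg₁_pos x hx.1.le
        have h2 := inv_anti₀ h1 (hle x hx.1.le)
        linarith)
    intro x hx
    have h0 : τ₁ 0 - τ₂ 0 = 0 := by
      have e₁ := hτ₁Γ 0 ⟨le_rfl, hT⟩
      have e₂ := hτ₂Γ 0 ⟨le_rfl, hT⟩
      rw [tc_zero hT hΓ₁] at e₁
      rw [tc_zero hT hΓ₂] at e₂
      rw [e₁, e₂, sub_self]
    have := hkey x hx
    simp only [h0] at this
    linarith
  intro t ht
  by_contra hlt
  push_neg at hlt
  set x := Γ₂ t with hx_def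
  have hΓ₁tT : Γ₁ t ≤ Γ₁ T := hsm₁.monotoneOn ht ⟨hT, le_rfl⟩ ht.2
  have hΓ₂tT : Γ₂ t ≤ Γ₂ T := hsm₂.monotoneOn ht ⟨hT, le_rfl⟩ ht.2
  have hx : x ∈ Set.Icc (0:ℝ) b :=
    ⟨hΓ₂_nonneg t ht, le_min (hlt.le.trans hΓ₁tT) hΓ₂tT⟩
  have hτ₂x : τ₂ x = t := hτ₂Γ t ht
  have h1 : t ≤ τ₁ x := hτ₂x ▸ hmono x hx
  have h2 : Γ₁ t ≤ Γ₁ (τ₁ x) :=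
    hsm₁.monotoneOn ht (hτ₁ x (hb1 hx)).1 h1
  rw [(hτ₁ x (hb1 hx)).2] at h2
  exact absurd h2 (not_le.mpr hlt)
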